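/- arXiv:1409.3741 — 3 statements merged into one kernel-verified Lean document; each statement's English description precedes it below -/
import Mathlib

section
/- Every δ-stationary point x* of the regret function f in a normalized polymatrix game is a (0.5 + δ)-approximate Nash equilibrium, i.e., f(x*) ≤ 0.5 + δ. -/
open Finset
open scoped Classical

noncomputable section

/-- maximum of `v` over a finset `S` (junk value `0` if `S` is empty). -/
noncomputable def finMaxOn {α : Type*} (S : Finset α) (v : α → ℝ) : ℝ :=
  if h : S.Nonempty then S.sup' h v else 0

/-- minimum of `v` over a finset `S` (junk value `0` if `S` is empty). -/
noncomputable def finMinOn {α : Type*} (S : Finset α) (v : α → ℝ) : ℝ :=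
  if h : S.Nonempty then S.inf' h v else 0

section Polymatrix

variable {n : ℕ} (m : Fin n → ℕ) (N : Fin n → Finset (Fin n))
  (A : ∀ i j : Fin n, Matrix (Fin (m i)) (Fin (m j)) ℝ)

/-- vector of pure-strategy payoffs of player `i` against profile `x`:
`u_i^s(x) = Σ_{j ∈ N(i)} A_ij x_j`. -/
def usVec (i : Fin n) (x : ∀ j, Fin (m j) → ℝ) : Fin (m i) → ℝ :=
  fun k => ∑ j ∈ N i, ∑ q, A i j k q * x j q

/-- payoff to player `i` from playing the (possibly formal) strategy `y`
against profile `x`: `u_i(y, x) = yᵀ u_i^s(x)`. -/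
def payTo (i : Fin n) (y : Fin (m i) → ℝ) (x : ∀ j, Fin (m j) → ℝ) : ℝ :=
  ∑ k, y k * usVec m N A i x k

/-- payoff of player `i` under profile `x`. -/
def payoff (i : Fin n) (x : ∀ j, Fin (m j) → ℝ) : ℝ := payTo m N A i (x i) x

/-- best-response payoff of player `i` against `x`. -/
def brp (i : Fin n) (x : ∀ j, Fin (m j) → ℝ) : ℝ := finMaxOn univ (usVec m N A i x)

/-- pure best responses of player `i` against `x`. -/
def brSet (i : Fin n) (x : ∀ j, Fin (m j) → ℝ) : Finset (Fin (m i)) :=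
  univ.filter fun k => ∀ l, usVec m N A i x l ≤ usVec m N A i x k

/-- `δ`-best responses of player `i` against `x`. -/
def brdSet (δ : ℝ) (i : Fin n) (x : ∀ j, Fin (m j) → ℝ) : Finset (Fin (m i)) :=
  univ.filter fun k => brp m N A i x - δ ≤ usVec m N A i x k

/-- regret of player `i` under `x`: `f_i(x)`. -/
def regret (i : Fin n) (x : ∀ j, Fin (m j) → ℝ) : ℝ :=
  brp m N A i x - payoff m N A i x

/-- maximum regret `f(x) = max_i f_i(x)`. -/
def maxRegret (x : ∀ j, Fin (m j) → ℝ) : ℝ := finMaxOn univ fun i => regret m N A i x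

/-- set of players with maximum regret `K(x)`. -/
def Kset (x : ∀ j, Fin (m j) → ℝ) : Finset (Fin n) :=
  univ.filter fun i => regret m N A i x = maxRegret m N A x

/-- `Df_i^δ(x, x')`. -/
def Dfd (δ : ℝ) (i : Fin n) (x x' : ∀ j, Fin (m j) → ℝ) : ℝ :=
  finMaxOn (brdSet m N A δ i x) (usVec m N A i x')
    - payTo m N A i (x i) x' - payTo m N A i (x' i) x + payTo m N A i (x i) x

/-- `Df^δ(x, x') = max_{i ∈ K(x)} Df_i^δ(x, x') - f(x)`. -/
def DfdAll (δ : ℝ) (x x' : ∀ j, Fin (m j) → ℝ) : ℝ :=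
  finMaxOn (Kset m N A x) (fun i => Dfd m N A δ i x x') - maxRegret m N A x

/-- `Df_i(x, x')` (with exact best responses). -/
def Dfbr (i : Fin n) (x x' : ∀ j, Fin (m j) → ℝ) : ℝ :=
  finMaxOn (brSet m N A i x) (usVec m N A i x')
    - payTo m N A i (x i) x' - payTo m N A i (x' i) x + payTo m N A i (x i) x

/-- the profile `(1-ε)x + εx'`. -/
def mix (x x' : ∀ j, Fin (m j) → ℝ) (ε : ℝ) : ∀ j, Fin (m j) → ℝ :=
  fun j => (1 - ε) • x j + ε • x' j

/-- `Λ_i^δ(x, x', ε)`; if the complement of the `δ`-best-response set is empty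
the inner maximum is `-∞`, i.e. `Λ_i^δ = 0`. -/
def Lamd (δ : ℝ) (i : Fin n) (x x' : ∀ j, Fin (m j) → ℝ) (ε : ℝ) : ℝ :=
  if _h : ((brdSet m N A δ i x)ᶜ).Nonempty then
    max 0 (finMaxOn (brdSet m N A δ i x)ᶜ (usVec m N A i (mix m x x' ε))
         - finMaxOn (brdSet m N A δ i x) (usVec m N A i (mix m x x' ε)))
  else 0

/-- `Λ_i(x, x', ε)` (with exact best responses). -/
def LamBr (i : Fin n) (x x' : ∀ j, Fin (m j) → ℝ) (ε : ℝ) : ℝ :=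
  if _h : ((brSet m N A i x)ᶜ).Nonempty then
    max 0 (finMaxOn (brSet m N A i x)ᶜ (usVec m N A i (mix m x x' ε))
         - finMaxOn (brSet m N A i x) (usVec m N A i (mix m x x' ε)))
  else 0

/-- `x` is a mixed strategy profile. -/
def isProfile (x : ∀ j, Fin (m j) → ℝ) : Prop :=
  ∀ j, x j ∈ stdSimplex ℝ (Fin (m j))

/-- the game is normalized: all pure-strategy payoffs of every player lie in
`[0,1]` against every mixed profile. -/
def normalized : Prop :=
  ∀ i (x : ∀ j, Fin (m j) → ℝ), isProfile m x →
    ∀ k, usVec m N A i x k ∈ Set.Icc (0:ℝ) 1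


/-- every `δ`-stationary point of the regret function in a
normalized polymatrix game is a `(0.5 + δ)`-approximate Nash equilibrium. -/
theorem stmt2 (hn : 0 < n) (hm : ∀ i, 0 < m i) (hnorm : normalized m N A)
    (δ : ℝ) (hδ : 0 < δ) (hδ' : δ ≤ 0.5)
    (xstar : ∀ j, Fin (m j) → ℝ) (hx : isProfile m xstar)
    (hstat : ∀ x', isProfile m x' → -δ ≤ DfdAll m N A δ xstar x') :
    maxRegret m N A xstar ≤ 0.5 + δ := by
  classical
  set f := maxRegret m N A xstar with hf
  have hFinNe : ∀ i : Fin n, (univ : Finset (Fin (m i))).Nonempty :=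
    fun i => ⟨⟨0, hm i⟩, mem_univ _⟩
  have hk : ∀ i : Fin n, ∃ ki : Fin (m i),
      ∀ l, usVec m N A i xstar l ≤ usVec m N A i xstar ki := by
    intro i
    obtain ⟨ki, -, hki⟩ :=
      Finset.exists_max_image univ (usVec m N A i xstar) (hFinNe i)
    exact ⟨ki, fun l => hki l (mem_univ l)⟩
  choose k hkmax using hk
  set x' : ∀ j, Fin (m j) → ℝ := fun j q => if q = k j then 1 else 0 with hx'def
  have hx' : isProfile m x' := by
    intro j
    constructor
    · intro q; dsimp [x']; split <;> norm_num
    · simp [x', Finset.sum_ite_eq']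
  have hbrp : ∀ i, brp m N A i xstar = usVec m N A i xstar (k i) := by
    intro i
    unfold brp finMaxOn
    rw [dif_pos (hFinNe i)]
    exact le_antisymm (Finset.sup'_le _ _ fun l _ => hkmax i l)
      (Finset.le_sup' _ (mem_univ _))
  have hpay' : ∀ i, payTo m N A i (x' i) xstar = brp m N A i xstar := by
    intro i
    rw [hbrp]
    simp [payTo, x', ite_mul, Finset.sum_ite_eq']
  have hKne : (Kset m N A xstar).Nonempty := by
    obtain ⟨i, -, hi⟩ := Finset.exists_max_image univ
      (fun i => regret m N A i xstar) ⟨⟨0, hn⟩, mem_univ _⟩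
    refine ⟨i, mem_filter.mpr ⟨mem_univ _, ?_⟩⟩
    unfold maxRegret finMaxOn
    rw [dif_pos ⟨i, mem_univ i⟩]
    exact le_antisymm (Finset.le_sup' (fun i => regret m N A i xstar) (mem_univ i))
      (Finset.sup'_le _ _ fun j _ => hi j (mem_univ j))
  have hDfd : ∀ i ∈ Kset m N A xstar, Dfd m N A δ i xstar x' ≤ 1 - f := by
    intro i hi
    have hif : regret m N A i xstar = f := (mem_filter.mp hi).2
    have hbrdne : (brdSet m N A δ i xstar).Nonempty := by
      refine ⟨k i, mem_filter.mpr ⟨mem_univ _, ?_⟩⟩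
      rw [hbrp i]; linarith
    have hM : finMaxOn (brdSet m N A δ i xstar) (usVec m N A i x') ≤ 1 := by
      unfold finMaxOn; rw [dif_pos hbrdne]
      exact Finset.sup'_le _ _ fun l _ => (hnorm i x' hx' l).2
    have hp1 : 0 ≤ payTo m N A i (xstar i) x' := by
      apply Finset.sum_nonneg
      intro q _
      exact mul_nonneg ((hx i).1 q) (hnorm i x' hx' q).1
    have hp2 := hpay' i
    have hpo : payTo m N A i (xstar i) xstar = payoff m N A i xstar := rfl
    unfold regret at hif
    unfold Dfd
    linarith
  have hstat' := hstat x' hx'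
  have hD : DfdAll m N A δ xstar x' ≤ (1 - f) - f := by
    unfold DfdAll
    have hle : finMaxOn (Kset m N A xstar) (fun i => Dfd m N A δ i xstar x') ≤ 1 - f := by
      unfold finMaxOn; rw [dif_pos hKne]
      exact Finset.sup'_le _ _ fun i hi => hDfd i hi
    have : maxRegret m N A xstar = f := rfl
    linarith
  have hfin : -δ ≤ (1 - f) - f := le_trans hstat' hD
  norm_num
  linarith

end Polymatrix
end
end

section
/- Let x, x' be profiles in a polymatrix game, i a player, and S = Br_i(x) the set of pure best responses of player i to x. Then for all ε ∈ [0,1], the best-response payoff satisfies: max_k (u_i^s((1−ε)x + εx'))_k = (1−ε)·max_{l∈S}(u_i^s(x))_l + ε·max_{l∈S}(u_i^s(x'))_l + Λ_i(x, x', ε), where Λ_i(x, x', ε) = max{0, max_{k∉S}(u_i^s(x̄))_k − max_{l∈S}(u_i^s(x̄))_l} with x̄ = (1−ε)x + εx'. -/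
open Finset
open scoped Classical

noncomputable section

section Polymatrix

variable {n : ℕ} (m : Fin n → ℕ) (N : Fin n → Finset (Fin n))
  (A : ∀ i j : Fin n, Matrix (Fin (m i)) (Fin (m j)) ℝ)

lemma usVec_mix (i : Fin n) (x x' : ∀ j, Fin (m j) → ℝ) (ε : ℝ) (k : Fin (m i)) :
    usVec m N A i (mix m x x' ε) k
      = (1 - ε) * usVec m N A i x k + ε * usVec m N A i x' k := by
  simp only [usVec, mix, Pi.add_apply, Pi.smul_apply, smul_eq_mul,
    Finset.mul_sum]
  rw [← Finset.sum_add_distrib]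
  refine Finset.sum_congr rfl fun j _ => ?_
  rw [← Finset.sum_add_distrib]
  refine Finset.sum_congr rfl fun q _ => ?_
  ring

lemma maxOn_affine {α : Type*} (S : Finset α) (h : S.Nonempty) (c ε : ℝ)
    (hε : 0 ≤ ε) (v : α → ℝ) :
    finMaxOn S (fun k => c + ε * v k) = c + ε * finMaxOn S v := by
  simp only [finMaxOn, dif_pos h]
  apply le_antisymm
  · refine Finset.sup'_le _ _ fun k hk => ?_
    exact add_le_add_right (mul_le_mul_of_nonneg_left (Finset.le_sup' v hk) hε) c
  · obtain ⟨k, hk, hke⟩ := Finset.exists_mem_eq_sup' h v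
    rw [hke]
    exact Finset.le_sup' (fun k => c + ε * v k) hk

/-- the best-response payoff at `(1−ε)x + εx'` splits as
`(1−ε)·max_{S} u_i^s(x) + ε·max_{S} u_i^s(x') + Λ_i(x, x', ε)` for
`S = Br_i(x)`. -/
theorem stmt4 (hm : ∀ i, 0 < m i) (i : Fin n) (x x' : ∀ j, Fin (m j) → ℝ)
    (ε : ℝ) (hε : ε ∈ Set.Icc (0:ℝ) 1) :
    brp m N A i (mix m x x' ε)
      = (1 - ε) * finMaxOn (brSet m N A i x) (usVec m N A i x)
        + ε * finMaxOn (brSet m N A i x) (usVec m N A i x')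
        + LamBr m N A i x x' ε := by
  classical
  obtain ⟨hε0, hε1⟩ := hε
  set S := brSet m N A i x with hS
  -- S is nonempty
  have huniv : (univ : Finset (Fin (m i))).Nonempty := by
    have := hm i
    exact ⟨⟨0, this⟩, mem_univ _⟩
  obtain ⟨k0, _, hk0⟩ := Finset.exists_max_image univ (usVec m N A i x) huniv
  have hSne : S.Nonempty := ⟨k0, by simp [hS, brSet, fun l => hk0 l (mem_univ l)]⟩
  -- usVec x is constant on S, equal to its maxOn
  have hconst : ∀ l ∈ S, usVec m N A i x l = finMaxOn S (usVec m N A i x) := by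
    intro l hl
    simp only [hS, brSet, mem_filter] at hl
    simp only [finMaxOn, dif_pos hSne]
    refine le_antisymm (Finset.le_sup' _ (by simpa [hS, brSet] using hl)) ?_
    exact Finset.sup'_le _ _ fun k hk => hl.2 k
  -- maxOn S of usVec (mix) splits
  have hMS : finMaxOn S (usVec m N A i (mix m x x' ε))
      = (1 - ε) * finMaxOn S (usVec m N A i x) + ε * finMaxOn S (usVec m N A i x') := by
    have : finMaxOn S (usVec m N A i (mix m x x' ε))
        = finMaxOn S (fun k => (1 - ε) * finMaxOn S (usVec m N A i x)
            + ε * usVec m N A i x' k) := by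
      simp only [finMaxOn, dif_pos hSne]
      refine Finset.sup'_congr hSne rfl fun k hk => ?_
      rw [usVec_mix, hconst k hk]
      simp [finMaxOn, dif_pos hSne]
    rw [this, maxOn_affine S hSne _ ε hε0]
  by_cases hc : (Sᶜ : Finset (Fin (m i))).Nonempty
  · -- split univ into S ∪ Sᶜ
    have hbrp : brp m N A i (mix m x x' ε)
        = max (finMaxOn S (usVec m N A i (mix m x x' ε)))
              (finMaxOn Sᶜ (usVec m N A i (mix m x x' ε))) := by
      simp only [brp, finMaxOn, dif_pos huniv, dif_pos hSne, dif_pos hc]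
      rw [← Finset.sup'_union hSne hc (usVec m N A i (mix m x x' ε))]
      congr 1
      simp
    have hlam : LamBr m N A i x x' ε
        = max 0 (finMaxOn Sᶜ (usVec m N A i (mix m x x' ε))
            - finMaxOn S (usVec m N A i (mix m x x' ε))) := by
      simp only [LamBr, ← hS, dif_pos hc]
    rw [hbrp, hlam, ← hMS]
    rcases le_total (finMaxOn Sᶜ (usVec m N A i (mix m x x' ε)))
        (finMaxOn S (usVec m N A i (mix m x x' ε))) with h | h
    · rw [max_eq_left h, max_eq_left (by linarith)]; ring
    · rw [max_eq_right h, max_eq_right (by linarith)]; ring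
  · -- Sᶜ empty: univ = S
    have hSu : S = univ := by
      have h2 := Finset.not_nonempty_iff_eq_empty.mp hc
      rwa [Finset.compl_eq_empty_iff] at h2
    have hlam : LamBr m N A i x x' ε = 0 := by
      simp only [LamBr, ← hS, dif_neg hc]
    rw [hlam, ← hMS, brp, ← hSu, add_zero]


end Polymatrix
end
end

section
/- One-step progress bound: in a normalized polymatrix game with δ ∈ (0, 0.5] and ε = δ/(δ+2), for any profiles x, x', writing f_new = f(x + ε(x'−x)), f = f(x), and D = max_i Df_i^δ(x, x'), we have f_new − f ≤ ε(D − f) + ε²(1 − D). -/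
open Finset
open scoped Classical

noncomputable section

section Polymatrix

variable {n : ℕ} (m : Fin n → ℕ) (N : Fin n → Finset (Fin n))
  (A : ∀ i j : Fin n, Matrix (Fin (m i)) (Fin (m j)) ℝ)

lemma le_maxOn' {α : Type*} {S : Finset α} {v : α → ℝ} {a : α} (ha : a ∈ S) :
    v a ≤ finMaxOn S v := by
  rw [finMaxOn, dif_pos ⟨a, ha⟩]; exact Finset.le_sup' v ha

lemma maxOn_le' {α : Type*} {S : Finset α} {v : α → ℝ} {c : ℝ} (hS : S.Nonempty)
    (h : ∀ a ∈ S, v a ≤ c) : finMaxOn S v ≤ c := by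
  rw [finMaxOn, dif_pos hS]; exact Finset.sup'_le hS v h

lemma payTo_right (i : Fin n) (y : Fin (m i) → ℝ) (x x' : ∀ j, Fin (m j) → ℝ) (ε : ℝ) :
    payTo m N A i y (mix m x x' ε)
      = (1 - ε) * payTo m N A i y x + ε * payTo m N A i y x' := by
  simp only [payTo, usVec_mix, Finset.mul_sum]
  rw [← Finset.sum_add_distrib]
  exact Finset.sum_congr rfl fun k _ => by ring

lemma payTo_left (i : Fin n) (x x' z : ∀ j, Fin (m j) → ℝ) (ε : ℝ) :
    payTo m N A i (mix m x x' ε i) z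
      = (1 - ε) * payTo m N A i (x i) z + ε * payTo m N A i (x' i) z := by
  simp only [payTo, mix, Pi.add_apply, Pi.smul_apply, smul_eq_mul, Finset.mul_sum]
  rw [← Finset.sum_add_distrib]
  exact Finset.sum_congr rfl fun k _ => by ring

/-- one-step progress bound for the gradient-descent step with
`ε = δ/(δ+2)`: `f_new − f ≤ ε(D − f) + ε²(1 − D)` where
`D = max_i Df_i^δ(x, x')`. -/
theorem stmt8 (hn : 0 < n) (hm : ∀ i, 0 < m i) (hnorm : normalized m N A)
    (δ : ℝ) (hδ : 0 < δ) (hδ' : δ ≤ 0.5)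
    (x x' : ∀ j, Fin (m j) → ℝ) (hx : isProfile m x) (hx' : isProfile m x') :
    maxRegret m N A (mix m x x' (δ / (δ + 2))) - maxRegret m N A x
      ≤ (δ / (δ + 2)) * (finMaxOn univ (fun i => Dfd m N A δ i x x')
            - maxRegret m N A x)
        + (δ / (δ + 2)) ^ 2
            * (1 - finMaxOn univ (fun i => Dfd m N A δ i x x')) := by
  set ε := δ / (δ + 2) with hεdef
  have hden : (0:ℝ) < δ + 2 := by linarith
  have hε0 : 0 < ε := div_pos hδ hden
  have hε1 : ε < 1 := by rw [hεdef, div_lt_one hden]; linarith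
  have hkey : ε * (1 + δ) ≤ δ := by
    rw [hεdef, div_mul_eq_mul_div, div_le_iff₀ hden]; nlinarith
  have hunivn : (univ : Finset (Fin n)).Nonempty := ⟨⟨0, hn⟩, mem_univ _⟩
  set D := finMaxOn univ (fun i => Dfd m N A δ i x x') with hDdef
  set f := maxRegret m N A x with hfdef
  have hmain : ∀ i : Fin n, regret m N A i (mix m x x' ε)
      ≤ f + ε * (D - f) + ε ^ 2 * (1 - D) := by
    intro i
    have hmu : (univ : Finset (Fin (m i))).Nonempty := ⟨⟨0, hm i⟩, mem_univ _⟩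
    obtain ⟨k0, -, hk0⟩ := Finset.exists_max_image univ (usVec m N A i x) hmu
    have hbrp0 : brp m N A i x = usVec m N A i x k0 :=
      le_antisymm (maxOn_le' hmu fun k _ => hk0 k (mem_univ _)) (le_maxOn' (mem_univ _))
    have hk0mem : k0 ∈ brdSet m N A δ i x := by
      rw [brdSet, mem_filter]
      exact ⟨mem_univ _, by rw [hbrp0]; linarith⟩
    have hBrd : (brdSet m N A δ i x).Nonempty := ⟨k0, hk0mem⟩
    set M := finMaxOn (brdSet m N A δ i x) (usVec m N A i x') with hMdef
    have hM0 : 0 ≤ M :=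
      le_trans (hnorm i x' hx' k0).1 (le_maxOn' hk0mem)
    have hM1 : M ≤ 1 := maxOn_le' hBrd fun k _ => (hnorm i x' hx' k).2
    set a := payTo m N A i (x i) x with hadef
    set b := payTo m N A i (x i) x' with hbdef
    set c := payTo m N A i (x' i) x with hcdef
    set d := payTo m N A i (x' i) x' with hddef
    have hbrp_new : brp m N A i (mix m x x' ε) ≤ (1 - ε) * brp m N A i x + ε * M := by
      refine maxOn_le' hmu fun k _ => ?_
      rw [usVec_mix]
      by_cases hk : k ∈ brdSet m N A δ i x
      · have h1 : usVec m N A i x k ≤ brp m N A i x := le_maxOn' (mem_univ _)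
        have h2 : usVec m N A i x' k ≤ M := le_maxOn' hk
        nlinarith
      · have h1 : usVec m N A i x k < brp m N A i x - δ := by
          rw [brdSet, mem_filter] at hk
          push_neg at hk
          exact hk (mem_univ _)
        have h2 : usVec m N A i x' k ≤ 1 := (hnorm i x' hx' k).2
        nlinarith
    have hpay : payoff m N A i (mix m x x' ε)
        = (1 - ε) * ((1 - ε) * a + ε * b) + ε * ((1 - ε) * c + ε * d) := by
      rw [payoff, payTo_left, payTo_right, payTo_right]
    have hreg : regret m N A i (mix m x x' ε)
        = brp m N A i (mix m x x' ε)
          - ((1 - ε) * ((1 - ε) * a + ε * b) + ε * ((1 - ε) * c + ε * d)) := by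
      rw [regret, hpay]
    have hd0 : 0 ≤ d := by
      rw [hddef, payTo]
      exact Finset.sum_nonneg fun k _ =>
        mul_nonneg ((hx' i).1 k) (hnorm i x' hx' k).1
    have hDle : M - b - c + a ≤ D := by
      have h : Dfd m N A δ i x x' ≤ D :=
        le_maxOn' (S := univ) (v := fun i => Dfd m N A δ i x x') (mem_univ i)
      have heq : Dfd m N A δ i x x' = M - b - c + a := by
        rw [Dfd, hMdef, hbdef, hcdef, hadef]
      linarith [heq ▸ h]
    have hfle : brp m N A i x - a ≤ f := by
      have h : regret m N A i x ≤ f :=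
        le_maxOn' (S := univ) (v := fun i => regret m N A i x) (mem_univ i)
      have heq : regret m N A i x = brp m N A i x - a := by
        rw [regret, payoff, hadef]
      linarith [heq ▸ h]
    rw [hreg]
    nlinarith [mul_nonneg (sub_nonneg.2 hε1.le) (sub_nonneg.2 hfle),
      mul_nonneg (mul_nonneg hε0.le (sub_nonneg.2 hε1.le)) (sub_nonneg.2 hDle),
      mul_nonneg (mul_nonneg hε0.le hε0.le) (sub_nonneg.2 hM1),
      mul_nonneg (mul_nonneg hε0.le hε0.le) hd0, hbrp_new]
  have hnew : maxRegret m N A (mix m x x' ε) ≤ f + ε * (D - f) + ε ^ 2 * (1 - D) :=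
    maxOn_le' hunivn fun i _ => hmain i
  linarith

end Polymatrix
end
end
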